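/- Let N be a finite set of non-monitors and P a family of paths (node sets). For v ∈ N let P_v := { p ∈ P : v ∈ p }. Theorem (UP sufficiency): if for every v ∈ S and every W ⊆ N \ {v} with |W| ≤ k, P_v is not contained in ⋃_{w ∈ W} P_w, then S is k-identifiable. -/
import Mathlib


variable {V : Type*} [DecidableEq V]

/-- A set `S` of non-monitors is `k`-identifiable: any two failure sets of size at most `k`
that differ within `S` are distinguished by the failure state of some path. -/
def kIdent (N : Finset V) (P : Set (Finset V)) (S : Finset V) (k : ℕ) : Prop :=
  ∀ F₁ F₂ : Finset V, F₁ ⊆ N → F₂ ⊆ N → F₁.card ≤ k → F₂.card ≤ k →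
    F₁ ∩ S ≠ F₂ ∩ S → ∃ p ∈ P, Xor' (p ∩ F₁ = ∅) (p ∩ F₂ = ∅)

private lemma up_aux (N S : Finset V) (P : Set (Finset V)) (k : ℕ)
    (h : ∀ v ∈ S, ∀ W : Finset V, W ⊆ N.erase v → W.card ≤ k →
      ¬ (∀ p ∈ P, v ∈ p → ∃ w ∈ W, w ∈ p))
    (F₁ F₂ : Finset V) (h₂N : F₂ ⊆ N) (h₂k : F₂.card ≤ k)
    (v : V) (hvS : v ∈ S) (hv1 : v ∈ F₁) (hv2 : v ∉ F₂) :
    ∃ p ∈ P, Xor' (p ∩ F₁ = ∅) (p ∩ F₂ = ∅) := by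
  have hW : F₂ ⊆ N.erase v := fun w hw =>
    Finset.mem_erase.mpr ⟨fun e => hv2 (e ▸ hw), h₂N hw⟩
  have := h v hvS F₂ hW h₂k
  push_neg at this
  obtain ⟨p, hpP, hvp, hp2⟩ := this
  refine ⟨p, hpP, Or.inr ⟨?_, ?_⟩⟩
  · ext w
    simp only [Finset.mem_inter, Finset.notMem_empty, iff_false]
    rintro ⟨hwp, hwF2⟩
    exact (hp2 w hwF2) hwp
  · intro hE
    have : v ∈ p ∩ F₁ := Finset.mem_inter.mpr ⟨hvp, hv1⟩
    simp [hE] at this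

theorem UP_sufficiency (N S : Finset V) (P : Set (Finset V)) (k : ℕ) (hS : S ⊆ N)
    (h : ∀ v ∈ S, ∀ W : Finset V, W ⊆ N.erase v → W.card ≤ k →
      ¬ (∀ p ∈ P, v ∈ p → ∃ w ∈ W, w ∈ p)) :
    kIdent N P S k := by
  intro F₁ F₂ h₁N h₂N h₁k h₂k hne
  have : ∃ v ∈ S, (v ∈ F₁ ∧ v ∉ F₂) ∨ (v ∈ F₂ ∧ v ∉ F₁) := by
    by_contra hc
    push_neg at hc
    apply hne
    ext w
    simp only [Finset.mem_inter]
    constructor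
    · rintro ⟨hw1, hwS⟩
      refine ⟨?_, hwS⟩
      exact (hc w hwS).1 hw1
    · rintro ⟨hw2, hwS⟩
      refine ⟨?_, hwS⟩
      exact (hc w hwS).2 hw2
  obtain ⟨v, hvS, hcase⟩ := this
  rcases hcase with ⟨hv1, hv2⟩ | ⟨hv2, hv1⟩
  · exact up_aux N S P k h F₁ F₂ h₂N h₂k v hvS hv1 hv2
  · obtain ⟨p, hpP, hx⟩ := up_aux N S P k h F₂ F₁ h₁N h₁k v hvS hv2 hv1
    exact ⟨p, hpP, hx.symm⟩
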